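/- arXiv:2506.04537 — 2 statements merged into one kernel-verified Lean document; each statement's English description precedes it below -/
import Mathlib

section
/- Let a, b ∈ ℝ and let (m_n)_{n≥0} be a sequence of real numbers such that for every n ≥ 0: ∑_{k=0}^{n} (−1)ᵏ C(n,k) m_{n−k} aᵏ = 0 if n is odd, and = b^{n/2} (n−1)!! if n is even (with (−1)!! = 1, so in particular m₀ = 1). Then for every z ∈ ℂ the series ∑_{n≥0} m_n zⁿ/n! converges absolutely and its sum equals exp(a·z + b·z²/2). -/
open Complex Finset

private lemma fact_two_mul (t : ℕ) :
    (2 * t).factorial = 2 ^ t * t.factorial * Nat.doubleFactorial (2 * t - 1) := by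
  cases t with
  | zero => simp
  | succ k =>
    have h : 2 * (k + 1) = (2 * k + 1) + 1 := by ring
    have h2 : 2 * (k + 1) - 1 = 2 * k + 1 := by omega
    rw [h2, h, Nat.factorial_eq_mul_doubleFactorial (2 * k + 1)]
    have h3 : 2 * k + 1 + 1 = 2 * (k + 1) := by ring
    rw [h3, Nat.doubleFactorial_two_mul]

private lemma conv_assoc (f g h : ℕ → ℝ) (n : ℕ) :
    ∑ p ∈ antidiagonal n, f p.1 * ∑ q ∈ antidiagonal p.2, g q.1 * h q.2 =
    ∑ p ∈ antidiagonal n, (∑ q ∈ antidiagonal p.1, f q.1 * g q.2) * h p.2 := by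
  have := congrArg (PowerSeries.coeff (R := ℝ) n)
    (mul_assoc (PowerSeries.mk f) (PowerSeries.mk g) (PowerSeries.mk h))
  simpa [PowerSeries.coeff_mul, PowerSeries.coeff_mk] using this.symm

private lemma sum_antidiagonal_exp (x y : ℝ) (N : ℕ) :
    ∑ p ∈ antidiagonal N, (x ^ p.1 / p.1.factorial) * (y ^ p.2 / p.2.factorial)
      = (x + y) ^ N / N.factorial := by
  rw [Finset.Nat.sum_antidiagonal_eq_sum_range_succ_mk, add_pow, Finset.sum_div]
  refine Finset.sum_congr rfl fun i hi => ?_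
  have hiN : i ≤ N := Nat.lt_succ_iff.mp (Finset.mem_range.mp hi)
  have key : ((N.choose i : ℕ) : ℝ) * i.factorial * (N - i).factorial = N.factorial := by
    push_cast [← Nat.choose_mul_factorial_mul_factorial hiN]; ring
  have h1 : (i.factorial : ℝ) ≠ 0 := Nat.cast_ne_zero.mpr i.factorial_ne_zero
  have h2 : ((N - i).factorial : ℝ) ≠ 0 := Nat.cast_ne_zero.mpr (N - i).factorial_ne_zero
  have h3 : (N.factorial : ℝ) ≠ 0 := Nat.cast_ne_zero.mpr N.factorial_ne_zero
  field_simp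
  linear_combination -x ^ i * y ^ (N - i) * key

private noncomputable def Bc (b : ℝ) (j : ℕ) : ℝ :=
  if Even j then (b / 2) ^ (j / 2) / (j / 2).factorial else 0

private noncomputable def gcoef (a b : ℝ) (n : ℕ) : ℝ :=
  n.factorial * ∑ p ∈ antidiagonal n, (a ^ p.1 / p.1.factorial) * Bc b p.2

private lemma gcoef_rec (a b : ℝ) (n : ℕ) :
    ∑ k ∈ Finset.range (n + 1),
        (-1 : ℝ) ^ k * (n.choose k : ℝ) * gcoef a b (n - k) * a ^ k =
      if Even n then b ^ (n / 2) * (Nat.doubleFactorial (n - 1) : ℝ) else 0 := by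
  have h1 : ∑ k ∈ Finset.range (n + 1),
      (-1 : ℝ) ^ k * (n.choose k : ℝ) * gcoef a b (n - k) * a ^ k
      = n.factorial * ∑ p ∈ antidiagonal n, ((-a) ^ p.1 / p.1.factorial) *
          ∑ q ∈ antidiagonal p.2, (a ^ q.1 / q.1.factorial) * Bc b q.2 := by
    rw [Finset.mul_sum, Finset.Nat.sum_antidiagonal_eq_sum_range_succ_mk]
    refine Finset.sum_congr rfl fun k hk => ?_
    have hkn : k ≤ n := Nat.lt_succ_iff.mp (Finset.mem_range.mp hk)
    have key : ((n.choose k : ℕ) : ℝ) * k.factorial * (n - k).factorial = n.factorial := by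
      push_cast [← Nat.choose_mul_factorial_mul_factorial hkn]; ring
    have h1 : (k.factorial : ℝ) ≠ 0 := Nat.cast_ne_zero.mpr k.factorial_ne_zero
    unfold gcoef
    rw [neg_pow, ← key]
    push_cast
    field_simp
    ring
  rw [h1]
  rw [show (∑ p ∈ antidiagonal n, ((-a) ^ p.1 / (p.1.factorial : ℝ)) *
          ∑ q ∈ antidiagonal p.2, (a ^ q.1 / q.1.factorial) * Bc b q.2)
      = ∑ p ∈ antidiagonal n,
          (∑ q ∈ antidiagonal p.1, ((-a) ^ q.1 / q.1.factorial) * (a ^ q.2 / q.2.factorial)) *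
            Bc b p.2
    from conv_assoc (fun i => (-a) ^ i / i.factorial) (fun i => a ^ i / i.factorial) (Bc b) n]
  have h2 : ∀ p ∈ antidiagonal n,
      (∑ q ∈ antidiagonal p.1, ((-a) ^ q.1 / q.1.factorial) * (a ^ q.2 / q.2.factorial)) * Bc b p.2
      = if p = ((0 : ℕ), n) then Bc b n else 0 := by
    intro p hp
    have hpn : p.1 + p.2 = n := Finset.HasAntidiagonal.mem_antidiagonal.mp hp
    rw [sum_antidiagonal_exp, neg_add_cancel]
    rcases Nat.eq_zero_or_pos p.1 with h | h
    · have hpeq : p = ((0 : ℕ), n) := by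
        obtain ⟨p1, p2⟩ := p
        simp only [Prod.mk.injEq]
        constructor <;> omega
      simp [hpeq, h]
    · have hne : p ≠ ((0 : ℕ), n) := by
        intro hc; rw [hc] at h; simp at h
      simp [zero_pow (show p.1 ≠ 0 by omega), hne]
  rw [Finset.sum_congr rfl h2, Finset.sum_ite_eq']
  have hmem : ((0 : ℕ), n) ∈ antidiagonal n := by simp
  rw [if_pos hmem]
  unfold Bc
  by_cases he : Even n
  · obtain ⟨t, ht⟩ := he
    have hn : n = 2 * t := by omega
    subst hn
    have hdiv : 2 * t / 2 = t := by omega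
    rw [if_pos (even_two_mul t), hdiv, fact_two_mul, if_pos (even_two_mul t)]
    have h1 : (t.factorial : ℝ) ≠ 0 := Nat.cast_ne_zero.mpr t.factorial_ne_zero
    push_cast
    field_simp
    ring_nf
    rw [mul_assoc, ← mul_pow]; norm_num
  · rw [if_neg he, if_neg he, mul_zero]

private lemma m_eq_gcoef (a b : ℝ) (m : ℕ → ℝ)
    (hrec : ∀ n : ℕ,
      ∑ k ∈ Finset.range (n + 1),
          (-1 : ℝ) ^ k * (n.choose k : ℝ) * m (n - k) * a ^ k =
        if Even n then b ^ (n / 2) * (Nat.doubleFactorial (n - 1) : ℝ) else 0) :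
    ∀ n, m n = gcoef a b n := by
  intro n
  induction n using Nat.strong_induction_on with
  | _ n ih =>
    have h1 := hrec n
    have h2 := gcoef_rec a b n
    rw [Finset.sum_range_succ'] at h1 h2
    simp only [pow_zero, Nat.choose_zero_right, Nat.cast_one, one_mul, mul_one,
      Nat.sub_zero] at h1 h2
    have hs : ∑ i ∈ Finset.range n,
        (-1 : ℝ) ^ (i + 1) * (n.choose (i + 1) : ℝ) * m (n - (i + 1)) * a ^ (i + 1)
        = ∑ i ∈ Finset.range n,
        (-1 : ℝ) ^ (i + 1) * (n.choose (i + 1) : ℝ) * gcoef a b (n - (i + 1)) * a ^ (i + 1) := by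
      refine Finset.sum_congr rfl fun i hi => ?_
      rw [ih (n - (i + 1)) (by have := Finset.mem_range.mp hi; omega)]
    rw [hs] at h1
    linarith

/-- If a sequence `(m n)` of real numbers satisfies the centered Gaussian moment
recurrence `∑_{k=0}^{n} (−1)ᵏ C(n,k) m_{n−k} aᵏ = 0` for odd `n` and
`= b^(n/2) (n−1)!!` for even `n`, then for every `z ∈ ℂ` the series
`∑ m_n zⁿ/n!` converges absolutely to `exp(a z + b z²/2)`. -/
theorem moment_generating_function_gaussian (a b : ℝ) (m : ℕ → ℝ)
    (hrec : ∀ n : ℕ,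
      ∑ k ∈ Finset.range (n + 1),
          (-1 : ℝ) ^ k * (n.choose k : ℝ) * m (n - k) * a ^ k =
        if Even n then b ^ (n / 2) * (Nat.doubleFactorial (n - 1) : ℝ) else 0) :
    ∀ z : ℂ,
      Summable (fun n : ℕ => ‖(m n : ℂ) * z ^ n / (Nat.factorial n : ℂ)‖) ∧
      ∑' n : ℕ, (m n : ℂ) * z ^ n / (Nat.factorial n : ℂ) =
        Complex.exp ((a : ℂ) * z + (b : ℂ) * z ^ 2 / 2) := by
  intro z
  set w : ℂ := (b : ℂ) * z ^ 2 / 2 with hw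
  set A : ℕ → ℂ := fun i => ((a : ℂ) * z) ^ i / i.factorial with hA
  set B : ℕ → ℂ := fun j => if Even j then w ^ (j / 2) / (j / 2).factorial else 0 with hB
  have hAsum : Summable fun i => ‖A i‖ := by
    have := Real.summable_pow_div_factorial ‖(a : ℂ) * z‖
    simpa [hA, norm_div, norm_pow] using this
  have hinj : Function.Injective (fun k : ℕ => 2 * k) := fun x y h => by
    have h2 : 2 * x = 2 * y := h
    omega
  have hsupp : ∀ x ∉ Set.range (fun k : ℕ => 2 * k), B x = 0 := by
    intro x hx
    have hodd : ¬ Even x := by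
      intro ⟨r, hr⟩
      exact hx ⟨r, show 2 * r = x by omega⟩
    simp [hB, hodd]
  have hcomp : ∀ k : ℕ, B (2 * k) = w ^ k / k.factorial := by
    intro k
    have hdiv : 2 * k / 2 = k := by omega
    simp [hB, even_two_mul, hdiv]
  have hBsum : Summable fun j => ‖B j‖ := by
    rw [← Function.Injective.summable_iff hinj (fun x hx => by rw [hsupp x hx, norm_zero])]
    have heq : ((fun j => ‖B j‖) ∘ fun k : ℕ => 2 * k) = fun k => ‖w‖ ^ k / k.factorial := by
      funext k
      simp [Function.comp, hcomp k, norm_div, norm_pow]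
    rw [heq]
    exact Real.summable_pow_div_factorial _
  have hm : ∀ n, m n = gcoef a b n := m_eq_gcoef a b m hrec
  have key : ∀ n : ℕ, (m n : ℂ) * z ^ n / (Nat.factorial n : ℂ)
      = ∑ p ∈ antidiagonal n, A p.1 * B p.2 := by
    intro n
    rw [hm n]
    unfold gcoef
    have hfac : ((n.factorial : ℕ) : ℂ) ≠ 0 := Nat.cast_ne_zero.mpr n.factorial_ne_zero
    have hcancel : ∀ s : ℂ, (n.factorial : ℂ) * s * z ^ n / (n.factorial : ℂ) = s * z ^ n := by
      intro s; rw [div_eq_iff hfac]; ring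
    push_cast
    rw [hcancel, Finset.sum_mul]
    refine Finset.sum_congr rfl fun p hp => ?_
    have hpn : p.1 + p.2 = n := Finset.HasAntidiagonal.mem_antidiagonal.mp hp
    unfold Bc
    rw [apply_ite ((↑·) : ℝ → ℂ)]
    simp only [hA, hB]
    by_cases he : Even p.2
    · rw [if_pos he, if_pos he]
      obtain ⟨t, ht⟩ := he
      have hp2 : p.2 = 2 * t := by omega
      have hdiv : p.2 / 2 = t := by omega
      rw [hdiv]
      push_cast
      have hzn : z ^ n = z ^ p.1 * z ^ (2 * t) := by
        rw [← pow_add, ← hp2, hpn]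
      have hwt : w ^ t = ((b : ℂ) / 2) ^ t * z ^ (2 * t) := by
        rw [hw, pow_mul, ← mul_pow]
        congr 1
        ring
      rw [hzn, hwt]
      simp only [mul_pow]
      ring
    · rw [if_neg he, if_neg he]
      push_cast
      ring
  have hgood := summable_norm_sum_mul_antidiagonal_of_summable_norm hAsum hBsum
  constructor
  · simp only [key]
    exact hgood
  · have hexpA : ∑' i, A i = Complex.exp ((a : ℂ) * z) := by
      rw [Complex.exp_eq_exp_ℂ, NormedSpace.exp_eq_tsum_div]
    have hexpB : ∑' j, B j = Complex.exp w := by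
      rw [Complex.exp_eq_exp_ℂ, NormedSpace.exp_eq_tsum_div]
      rw [← Function.Injective.tsum_eq hinj (f := B) (fun x hx => by
        by_contra hcon
        exact (Function.mem_support.mp hx) (hsupp x hcon))]
      exact tsum_congr hcomp
    calc ∑' n : ℕ, (m n : ℂ) * z ^ n / (Nat.factorial n : ℂ)
        = ∑' n : ℕ, ∑ p ∈ antidiagonal n, A p.1 * B p.2 := tsum_congr key
      _ = (∑' i, A i) * (∑' j, B j) :=
          (tsum_mul_tsum_eq_tsum_sum_antidiagonal_of_summable_norm hAsum hBsum).symm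
      _ = Complex.exp ((a : ℂ) * z) * Complex.exp w := by rw [hexpA, hexpB]
      _ = Complex.exp ((a : ℂ) * z + w) := (Complex.exp_add _ _).symm
end

section
/- Let H be a complex Hilbert space with complex inner product ⟪·,·⟫ (conjugate-linear in the first argument) and real inner product (z,u) := Re⟪z,u⟫. Let S be a bounded ℝ-linear operator on H, symmetric for (·,·) (i.e. (Sz,u) = (z,Su) for all z,u), such that (z,Sz)·(u,Su) ≥ (z,Su)² + (Im⟪z,u⟫)² for all z,u ∈ H. Then ‖z‖ ≤ ‖S‖·‖Sz‖ for every z ∈ H; consequently S is injective with closed range, S is bijective, and its inverse is a bounded ℝ-linear operator with ‖S⁻¹‖ ≤ ‖S‖. -/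
open Complex

local notation "⟪" x ", " y "⟫" => @inner ℂ _ _ x y

/-- If `S` is a bounded ℝ-linear symmetric operator on a complex Hilbert space
with `(z,Sz)(u,Su) ≥ (z,Su)² + (Im⟪z,u⟫)²` for all `z,u` (where
`(z,u) = Re⟪z,u⟫`), then `‖z‖ ≤ ‖S‖·‖Sz‖` for all `z`; consequently `S` is
injective with closed range, bijective, and has a bounded ℝ-linear inverse `T`
with `‖T‖ ≤ ‖S‖`. -/
theorem covariance_operator_invertible {H : Type*} [NormedAddCommGroup H]
    [InnerProductSpace ℂ H] [CompleteSpace H] (S : H →L[ℝ] H)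
    (hsymm : ∀ z u : H, (⟪S z, u⟫).re = (⟪z, S u⟫).re)
    (hineq : ∀ z u : H,
      (⟪z, S u⟫).re ^ 2 + (⟪z, u⟫).im ^ 2 ≤ (⟪z, S z⟫).re * (⟪u, S u⟫).re) :
    (∀ z : H, ‖z‖ ≤ ‖S‖ * ‖S z‖) ∧
    Function.Injective S ∧
    IsClosed (Set.range S) ∧
    Function.Bijective S ∧
    ∃ T : H →L[ℝ] H, (∀ z : H, T (S z) = z ∧ S (T z) = z) ∧ ‖T‖ ≤ ‖S‖ := by
  -- main estimate
  have key : ∀ z : H, ‖z‖ ≤ ‖S‖ * ‖S z‖ := by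
    intro z
    rcases eq_or_ne z 0 with rfl | hz
    · simp
    have hz' : 0 < ‖z‖ := norm_pos_iff.mpr hz
    have h1 := hineq z (Complex.I • z)
    have hzz : ⟪z, z⟫ = ((‖z‖ : ℂ)) ^ 2 := inner_self_eq_norm_sq_to_K z
    have him : (⟪z, Complex.I • z⟫).im = ‖z‖ ^ 2 := by
      rw [inner_smul_right, hzz]
      simp [← Complex.ofReal_pow]
    rw [him] at h1
    have hA : |(⟪z, S z⟫).re| ≤ ‖z‖ * ‖S z‖ := by
      calc |(⟪z, S z⟫).re| ≤ ‖⟪z, S z⟫‖ := Complex.abs_re_le_norm _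
        _ = ‖⟪z, S z⟫‖ := rfl
        _ ≤ ‖z‖ * ‖S z‖ := norm_inner_le_norm z (S z)
    have hB : |(⟪Complex.I • z, S (Complex.I • z)⟫).re| ≤ ‖S‖ * ‖z‖ ^ 2 := by
      have h2 : ‖Complex.I • z‖ = ‖z‖ := by
        rw [norm_smul]; simp
      calc |(⟪Complex.I • z, S (Complex.I • z)⟫).re|
          ≤ ‖⟪Complex.I • z, S (Complex.I • z)⟫‖ := Complex.abs_re_le_norm _
        _ ≤ ‖Complex.I • z‖ * ‖S (Complex.I • z)‖ := norm_inner_le_norm _ _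
        _ ≤ ‖z‖ * (‖S‖ * ‖z‖) := by
            rw [h2]
            exact mul_le_mul_of_nonneg_left (by simpa [h2] using S.le_opNorm (Complex.I • z))
              (norm_nonneg z)
        _ = ‖S‖ * ‖z‖ ^ 2 := by ring
    have hprod : (‖z‖ ^ 2) ^ 2 ≤ (‖z‖ * ‖S z‖) * (‖S‖ * ‖z‖ ^ 2) := by
      have h3 : (‖z‖ ^ 2) ^ 2 ≤ (⟪z, S z⟫).re * (⟪Complex.I • z, S (Complex.I • z)⟫).re := by
        nlinarith [sq_nonneg ((⟪z, S (Complex.I • z)⟫).re)]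
      calc (‖z‖ ^ 2) ^ 2 ≤ (⟪z, S z⟫).re * (⟪Complex.I • z, S (Complex.I • z)⟫).re := h3
        _ ≤ |(⟪z, S z⟫).re| * |(⟪Complex.I • z, S (Complex.I • z)⟫).re| := by
            rw [← abs_mul]; exact le_abs_self _
        _ ≤ (‖z‖ * ‖S z‖) * (‖S‖ * ‖z‖ ^ 2) := by
            apply mul_le_mul hA hB (abs_nonneg _)
            positivity
    have h5 : ‖z‖ * ‖z‖ ^ 3 ≤ (‖S‖ * ‖S z‖) * ‖z‖ ^ 3 := by nlinarith [hprod]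
    exact le_of_mul_le_mul_right h5 (pow_pos hz' 3)
  have hinj : Function.Injective S := by
    intro a b hab
    have h := key (a - b)
    rw [map_sub, hab, sub_self, norm_zero, mul_zero] at h
    have := norm_nonneg (a - b)
    have : ‖a - b‖ = 0 := le_antisymm h this
    rwa [norm_sub_eq_zero_iff] at this
  -- antilipschitz
  have hanti : AntilipschitzWith (Real.toNNReal (max ‖S‖ 1)) S := by
    rw [antilipschitzWith_iff_le_mul_dist]
    intro x y
    rw [dist_eq_norm, dist_eq_norm, ← map_sub]
    calc ‖x - y‖ ≤ ‖S‖ * ‖S (x - y)‖ := key _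
      _ ≤ max ‖S‖ 1 * ‖S (x - y)‖ :=
          mul_le_mul_of_nonneg_right (le_max_left _ _) (norm_nonneg _)
      _ = (Real.toNNReal (max ‖S‖ 1) : ℝ) * ‖S (x - y)‖ := by
          rw [Real.coe_toNNReal _ (le_trans zero_le_one (le_max_right _ _))]
  have hclosed : IsClosed (Set.range S) :=
    hanti.isClosed_range S.uniformContinuous
  -- surjectivity via orthogonal complement
  letI : InnerProductSpace ℝ H := InnerProductSpace.complexToReal
  have hsurj : Function.Surjective S := by
    set K : Submodule ℝ H := LinearMap.range (S : H →ₗ[ℝ] H) with hK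
    have hKs : (K : Set H) = Set.range S := by
      ext x; simp [hK]
    have hKc : IsClosed (K : Set H) := by rw [hKs]; exact hclosed
    haveI : CompleteSpace K := hKc.completeSpace_coe
    have hbot : Kᗮ = ⊥ := by
      rw [Submodule.eq_bot_iff]
      intro u hu
      have hSu : S u = 0 := by
        have h1 : ∀ z : H, (⟪S z, u⟫).re = 0 := by
          intro z
          have := hu (S z) ⟨z, rfl⟩
          rw [real_inner_eq_re_inner ℂ] at this
          simpa using this
        have h2 : (⟪S u, S u⟫).re = 0 := by
          rw [← hsymm (S u) u]; exact h1 (S u)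
        have : ‖S u‖ ^ 2 = 0 := by
          rw [← h2, inner_self_eq_norm_sq_to_K]
          simp [← Complex.ofReal_pow]
        exact norm_eq_zero.mp ((pow_eq_zero_iff two_ne_zero).mp this)
      have : u = 0 := hinj (by rw [hSu, map_zero])
      exact this
    have hKtop : K = ⊤ := Submodule.orthogonal_eq_bot_iff.mp hbot
    intro y
    have : y ∈ K := hKtop ▸ Submodule.mem_top
    obtain ⟨x, hx⟩ := this
    exact ⟨x, hx⟩
  have hbij : Function.Bijective S := ⟨hinj, hsurj⟩
  refine ⟨key, hinj, hclosed, hbij, ?_⟩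
  let e : H ≃L[ℝ] H := ContinuousLinearEquiv.ofBijective S
    (LinearMap.ker_eq_bot.mpr hinj) (LinearMap.range_eq_top.mpr hsurj)
  have heS : ∀ z, e z = S z := fun z => rfl
  have hST : ∀ z, S (e.symm z) = z := fun z => by
    rw [← heS]; exact e.apply_symm_apply z
  refine ⟨e.symm.toContinuousLinearMap, fun z => ⟨?_, hST z⟩, ?_⟩
  · show e.symm (S z) = z
    rw [← heS]; exact e.symm_apply_apply z
  · apply ContinuousLinearMap.opNorm_le_bound _ (norm_nonneg S)
    intro z
    calc ‖e.symm.toContinuousLinearMap z‖ ≤ ‖S‖ * ‖S (e.symm z)‖ := key _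
      _ = ‖S‖ * ‖z‖ := by rw [hST z]
end
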